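/- For every positive integer n and every real x > 0, the n-th derivative of the function x ↦ e^{1/x} satisfies (e^{1/x})^{(n)} = (-1)^n ∫_0^∞ (∑_{j=0}^∞ t^j/(j!(j+1)!)) t^n e^{-xt} dt. -/

import Mathlib

open MeasureTheory Real Set Filter

namespace ExpInvAux

noncomputable def f (t : ℝ) : ℝ :=
  ∑' j : ℕ, t ^ j / ((Nat.factorial j : ℝ) * (Nat.factorial (j + 1)))

lemma summable_aux (t : ℝ) :
    Summable (fun j : ℕ => t ^ j / ((Nat.factorial j : ℝ) * (Nat.factorial (j + 1)))) := by
  apply Summable.of_norm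
  refine Summable.of_nonneg_of_le (fun j => norm_nonneg _) (fun j => ?_)
    (Real.summable_pow_div_factorial |t|)
  have h1 : (0:ℝ) < (Nat.factorial j : ℝ) := by positivity
  have h2 : (Nat.factorial j : ℝ) ≤ (Nat.factorial j : ℝ) * (Nat.factorial (j + 1)) := by
    have : (1:ℝ) ≤ (Nat.factorial (j+1) : ℝ) := by
      exact_mod_cast Nat.one_le_iff_ne_zero.mpr (Nat.factorial_ne_zero _)
    nlinarith
  rw [norm_div, norm_pow, Real.norm_eq_abs, Real.norm_eq_abs,
    abs_of_pos (by positivity : (0:ℝ) < (Nat.factorial j : ℝ) * (Nat.factorial (j + 1)))]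
  gcongr

lemma f_nonneg {t : ℝ} (ht : 0 ≤ t) : 0 ≤ f t :=
  tsum_nonneg fun j => by positivity

lemma exp_tsum (u : ℝ) : Real.exp u = ∑' m : ℕ, u ^ m / (Nat.factorial m : ℝ) := by
  rw [Real.exp_eq_exp_ℝ, NormedSpace.exp_eq_tsum_div]

lemma f_le {t : ℝ} (ht : 0 ≤ t) : f t ≤ Real.exp (2 * Real.sqrt t) := by
  rw [exp_tsum]
  refine Summable.tsum_le_tsum_of_inj (fun j => 2 * j) (fun a b h => by dsimp at h; omega)
    (fun m _ => by positivity) (fun j => ?_) (summable_aux t)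
    (Real.summable_pow_div_factorial _)
  have hs : Real.sqrt t ^ 2 = t := Real.sq_sqrt ht
  have hnum : (2 * Real.sqrt t) ^ (2 * j) = 4 ^ j * t ^ j := by
    rw [mul_pow, pow_mul, pow_mul, hs]
    norm_num
  have hchoose : (2 * j).choose j ≤ 4 ^ j := by
    have h1 : (2 * j).choose j ≤ ∑ m ∈ Finset.range (2 * j + 1), (2 * j).choose m := by
      apply Finset.single_le_sum (f := fun m => (2 * j).choose m) (fun i _ => Nat.zero_le _)
      simp only [Finset.mem_range]
      omega
    rw [Nat.sum_range_choose] at h1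
    calc (2 * j).choose j ≤ 2 ^ (2 * j) := h1
      _ = 4 ^ j := by rw [pow_mul]; norm_num
  have hfacNat : (2 * j).factorial ≤ 4 ^ j * (Nat.factorial j * Nat.factorial (j + 1)) := by
    have h0 : (2 * j).choose j * Nat.factorial j * Nat.factorial (2 * j - j)
        = (2 * j).factorial := Nat.choose_mul_factorial_mul_factorial (by omega)
    have h2 : 2 * j - j = j := by omega
    rw [h2] at h0
    calc (2 * j).factorial = (2 * j).choose j * Nat.factorial j * Nat.factorial j := h0.symm
      _ ≤ 4 ^ j * Nat.factorial j * Nat.factorial j := by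
          exact Nat.mul_le_mul_right _ (Nat.mul_le_mul_right _ hchoose)
      _ ≤ 4 ^ j * (Nat.factorial j * Nat.factorial (j + 1)) := by
          rw [mul_assoc]
          exact Nat.mul_le_mul_left _ (Nat.mul_le_mul_left _ (Nat.factorial_le (by omega)))
  have hfac : ((2 * j).factorial : ℝ) ≤ 4 ^ j * ((Nat.factorial j : ℝ) * (Nat.factorial (j + 1))) := by
    exact_mod_cast hfacNat
  rw [hnum, div_le_div_iff₀ (by positivity) (by positivity)]
  have htj : (0:ℝ) ≤ t ^ j := pow_nonneg ht j
  calc t ^ j * ((2 * j).factorial : ℝ)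
      ≤ t ^ j * (4 ^ j * ((Nat.factorial j : ℝ) * (Nat.factorial (j + 1)))) := by
        exact mul_le_mul_of_nonneg_left hfac htj
    _ = 4 ^ j * t ^ j * ((Nat.factorial j : ℝ) * (Nat.factorial (j + 1))) := by ring

lemma two_sqrt_le {t b : ℝ} (ht : 0 ≤ t) (hb : 0 < b) :
    2 * Real.sqrt t ≤ b / 2 * t + 2 / b := by
  have h4 : b * (2 / b) = 2 := by field_simp
  have hs : b ^ 2 * Real.sqrt t ^ 2 = b ^ 2 * t := by rw [Real.sq_sqrt ht]
  nlinarith [sq_nonneg (b * Real.sqrt t - 2), hs, h4, hb, Real.sqrt_nonneg t]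

lemma continuous_f : Continuous f := by
  rw [continuous_iff_continuousAt]
  intro t
  have hu : Summable (fun j : ℕ => (|t| + 1) ^ j / ((Nat.factorial j : ℝ) * (Nat.factorial (j + 1)))) :=
    summable_aux (|t| + 1)
  have h : TendstoUniformlyOn
      (fun (N : Finset ℕ) y => ∑ j ∈ N, y ^ j / ((Nat.factorial j : ℝ) * (Nat.factorial (j + 1))))
      f atTop (Metric.ball t 1) := by
    apply tendstoUniformlyOn_tsum hu
    intro j y hy
    have hyt : |y| ≤ |t| + 1 := by
      have hd : |y - t| < 1 := by
        have := Metric.mem_ball.mp hy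
        rwa [Real.dist_eq] at this
      calc |y| = |y - t + t| := by ring_nf
        _ ≤ |y - t| + |t| := abs_add_le _ _
        _ ≤ |t| + 1 := by linarith
    rw [norm_div, norm_pow, Real.norm_eq_abs, Real.norm_eq_abs,
      abs_of_pos (by positivity : (0:ℝ) < (Nat.factorial j : ℝ) * (Nat.factorial (j + 1)))]
    gcongr
  have hc : ContinuousOn f (Metric.ball t 1) := by
    apply h.continuousOn
    refine Filter.Eventually.frequently ?_
    filter_upwards with N
    apply Continuous.continuousOn
    exact continuous_finset_sum _ fun j _ => (continuous_pow j).div_const _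
  exact hc.continuousAt (Metric.ball_mem_nhds t one_pos)

lemma integrableOn_poly_exp {b : ℝ} (hb : 0 < b) (m : ℕ) :
    IntegrableOn (fun t : ℝ => t ^ m * Real.exp (-(b * t))) (Ioi 0) := by
  have h := integrableOn_rpow_mul_exp_neg_mul_rpow
    (s := (m : ℝ)) (p := 1) (lt_of_lt_of_le (by norm_num) (Nat.cast_nonneg m)) zero_lt_one hb
  refine h.congr_fun (fun y hy => ?_) measurableSet_Ioi
  dsimp only
  rw [Real.rpow_natCast, Real.rpow_one, neg_mul]

lemma integrable_main {b : ℝ} (hb : 0 < b) (m : ℕ) :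
    IntegrableOn (fun t : ℝ => f t * t ^ m * Real.exp (-(b * t))) (Ioi 0) := by
  have hbound := (integrableOn_poly_exp (half_pos hb) m).const_mul (Real.exp (2 / b))
  apply Integrable.mono' hbound
  · exact ((continuous_f.mul (continuous_pow m)).mul
      (Real.continuous_exp.comp (continuous_const.mul continuous_id).neg)).aestronglyMeasurable
  · filter_upwards [ae_restrict_mem measurableSet_Ioi] with t ht
    have ht0 : (0:ℝ) < t := ht
    have hf0 : 0 ≤ f t := f_nonneg ht0.le
    rw [Real.norm_eq_abs, abs_of_nonneg (by positivity)]
    have key : Real.exp (b / 2 * t + 2 / b) * Real.exp (-(b * t))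
        = Real.exp (2 / b) * Real.exp (-(b / 2 * t)) := by
      rw [← Real.exp_add, ← Real.exp_add]
      congr 1
      ring
    calc f t * t ^ m * Real.exp (-(b * t))
        ≤ Real.exp (2 * Real.sqrt t) * t ^ m * Real.exp (-(b * t)) := by
          gcongr
          exact f_le ht0.le
      _ ≤ Real.exp (b / 2 * t + 2 / b) * t ^ m * Real.exp (-(b * t)) := by
          gcongr
          exact two_sqrt_le ht0.le hb
      _ = Real.exp (2 / b) * (t ^ m * Real.exp (-(b / 2 * t))) := by
          rw [show Real.exp (b / 2 * t + 2 / b) * t ^ m * Real.exp (-(b * t))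
            = Real.exp (b / 2 * t + 2 / b) * Real.exp (-(b * t)) * t ^ m from by ring, key]
          ring

lemma term_integrable {x : ℝ} (hx : 0 < x) (j : ℕ) :
    IntegrableOn (fun t : ℝ =>
      t ^ j / ((Nat.factorial j : ℝ) * (Nat.factorial (j + 1))) * Real.exp (-(x * t)))
      (Ioi 0) := by
  have h : IntegrableOn
      (fun t : ℝ => t ^ j * Real.exp (-(x * t)) / ((Nat.factorial j : ℝ) * (Nat.factorial (j + 1))))
      (Ioi 0) :=
    (integrableOn_poly_exp hx j).div_const _
  refine h.congr_fun (fun y _ => by ring) measurableSet_Ioi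

lemma term_integral {x : ℝ} (hx : 0 < x) (j : ℕ) :
    ∫ t in Ioi 0, t ^ j * Real.exp (-(x * t)) = (1 / x) ^ (j + 1) * (Nat.factorial j : ℝ) := by
  have h := Real.integral_rpow_mul_exp_neg_mul_Ioi (a := (j : ℝ) + 1) (by positivity) hx
  rw [Real.Gamma_nat_eq_factorial] at h
  have h2 : ((1:ℝ) / x) ^ ((j : ℝ) + 1) = (1 / x) ^ (j + 1) := by
    rw [show ((j : ℝ) + 1) = ((j + 1 : ℕ) : ℝ) by push_cast; ring, Real.rpow_natCast]
  rw [h2] at h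
  rw [← h]
  apply setIntegral_congr_fun measurableSet_Ioi
  intro t ht
  simp only
  norm_num [Real.rpow_natCast]

lemma term_integral' {x : ℝ} (hx : 0 < x) (j : ℕ) :
    ∫ t in Ioi 0,
      t ^ j / ((Nat.factorial j : ℝ) * (Nat.factorial (j + 1))) * Real.exp (-(x * t))
      = (1 / x) ^ (j + 1) / (Nat.factorial (j + 1) : ℝ) := by
  have heq : (fun t : ℝ =>
      t ^ j / ((Nat.factorial j : ℝ) * (Nat.factorial (j + 1))) * Real.exp (-(x * t)))
      = fun t => (1 / ((Nat.factorial j : ℝ) * (Nat.factorial (j + 1))))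
          * (t ^ j * Real.exp (-(x * t))) := by
    funext t; ring
  rw [heq, integral_const_mul, term_integral hx j]
  have h1 : (0:ℝ) < (Nat.factorial j : ℝ) := by positivity
  have h2 : (0:ℝ) < (Nat.factorial (j + 1) : ℝ) := by positivity
  field_simp

lemma summable_shift (u : ℝ) :
    Summable (fun j : ℕ => u ^ (j + 1) / (Nat.factorial (j + 1) : ℝ)) :=
  (Real.summable_pow_div_factorial u).comp_injective (add_left_injective 1)

lemma tsum_shift (u : ℝ) :
    ∑' j : ℕ, u ^ (j + 1) / (Nat.factorial (j + 1) : ℝ) = Real.exp u - 1 := by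
  have h := exp_tsum u
  rw [Summable.tsum_eq_zero_add (Real.summable_pow_div_factorial u)] at h
  simp only [pow_zero, Nat.factorial_zero, Nat.cast_one, div_one] at h
  linarith

lemma F_zero {x : ℝ} (hx : 0 < x) :
    ∫ t in Ioi 0, f t * Real.exp (-(x * t)) = Real.exp (1 / x) - 1 := by
  have hnorm : ∀ j : ℕ, (∫ t in Ioi 0,
      ‖t ^ j / ((Nat.factorial j : ℝ) * (Nat.factorial (j + 1))) * Real.exp (-(x * t))‖)
      = (1 / x) ^ (j + 1) / (Nat.factorial (j + 1) : ℝ) := by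
    intro j
    rw [← term_integral' hx j]
    apply setIntegral_congr_fun measurableSet_Ioi
    intro t ht
    have ht0 : (0:ℝ) < t := ht
    simp only [Real.norm_eq_abs]
    exact abs_of_nonneg (by positivity)
  have hsum : Summable (fun j : ℕ => ∫ t in Ioi 0,
      ‖t ^ j / ((Nat.factorial j : ℝ) * (Nat.factorial (j + 1))) * Real.exp (-(x * t))‖) := by
    simp_rw [hnorm]
    exact summable_shift (1 / x)
  have key := integral_tsum_of_summable_integral_norm
    (F := fun (j : ℕ) (t : ℝ) =>
      t ^ j / ((Nat.factorial j : ℝ) * (Nat.factorial (j + 1))) * Real.exp (-(x * t)))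
    (μ := volume.restrict (Ioi 0)) (fun j => term_integrable hx j) hsum
  have hrw : ∀ t : ℝ, (∑' j : ℕ,
      t ^ j / ((Nat.factorial j : ℝ) * (Nat.factorial (j + 1))) * Real.exp (-(x * t)))
      = f t * Real.exp (-(x * t)) := by
    intro t
    rw [f, tsum_mul_right]
  simp_rw [hrw] at key
  rw [← key]
  simp_rw [term_integral' hx]
  exact tsum_shift (1 / x)

lemma hasDerivAt_F (n : ℕ) {x : ℝ} (hx : 0 < x) :
    HasDerivAt (fun y : ℝ => ∫ t in Ioi 0, f t * t ^ n * Real.exp (-(y * t)))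
      (-(∫ t in Ioi 0, f t * t ^ (n + 1) * Real.exp (-(x * t)))) x := by
  have hcont : ∀ y : ℝ, Continuous (fun t : ℝ => f t * t ^ n * Real.exp (-(y * t))) :=
    fun y => (continuous_f.mul (continuous_pow n)).mul
      (Real.continuous_exp.comp (continuous_const.mul continuous_id).neg)
  have hcont' : Continuous (fun t : ℝ => -(f t * t ^ (n + 1) * Real.exp (-(x * t)))) :=
    ((continuous_f.mul (continuous_pow (n + 1))).mul
      (Real.continuous_exp.comp (continuous_const.mul continuous_id).neg)).neg
  have key := hasDerivAt_integral_of_dominated_loc_of_deriv_le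
    (μ := volume.restrict (Ioi 0)) (x₀ := x) (s := Metric.ball x (x / 2))
    (F := fun y t => f t * t ^ n * Real.exp (-(y * t)))
    (F' := fun y t => -(f t * t ^ (n + 1) * Real.exp (-(y * t))))
    (bound := fun t => f t * t ^ (n + 1) * Real.exp (-(x / 2 * t)))
    (Metric.ball_mem_nhds x (half_pos hx))
    (Filter.Eventually.of_forall fun y => (hcont y).aestronglyMeasurable)
    (integrable_main hx n)
    hcont'.aestronglyMeasurable
    ?_ (integrable_main (half_pos hx) (n + 1)) ?_
  · have hneg : ∫ t in Ioi 0, -(f t * t ^ (n + 1) * Real.exp (-(x * t)))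
        = -(∫ t in Ioi 0, f t * t ^ (n + 1) * Real.exp (-(x * t))) := integral_neg _
    rw [hneg] at key
    exact key.2
  · filter_upwards [ae_restrict_mem measurableSet_Ioi] with t ht
    intro y hy
    have ht0 : (0:ℝ) < t := ht
    have hf0 : 0 ≤ f t := f_nonneg ht0.le
    have hy2 : x / 2 ≤ y := by
      have := Metric.mem_ball.mp hy
      rw [Real.dist_eq] at this
      have h := abs_lt.mp this
      linarith [h.1]
    rw [norm_neg, Real.norm_eq_abs, abs_of_nonneg (by positivity)]
    have h1 : Real.exp (-(y * t)) ≤ Real.exp (-(x / 2 * t)) := by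
      apply Real.exp_le_exp.mpr
      nlinarith
    exact mul_le_mul_of_nonneg_left h1 (by positivity)
  · filter_upwards [ae_restrict_mem measurableSet_Ioi] with t ht
    intro y hy
    have hlin : HasDerivAt (fun y : ℝ => -(y * t)) (-t) y := by
      simpa using ((hasDerivAt_id y).mul_const t).fun_neg
    have h2 : HasDerivAt (fun y : ℝ => Real.exp (-(y * t)))
        (Real.exp (-(y * t)) * (-t)) y := hlin.exp
    have h3 : HasDerivAt (fun y : ℝ => f t * t ^ n * Real.exp (-(y * t)))
        (f t * t ^ n * (Real.exp (-(y * t)) * (-t))) y := h2.const_mul (f t * t ^ n)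
    exact h3.congr_deriv (by ring)

lemma main_claim (m : ℕ) (hm : 1 ≤ m) : ∀ y : ℝ, 0 < y →
    iteratedDeriv m (fun y : ℝ => Real.exp (1 / y)) y
      = (-1 : ℝ) ^ m * ∫ t in Ioi 0, f t * t ^ m * Real.exp (-(y * t)) := by
  induction m, hm using Nat.le_induction with
  | base =>
    intro y hy
    rw [iteratedDeriv_one]
    have heq : (fun z : ℝ => (∫ t in Ioi 0, f t * t ^ 0 * Real.exp (-(z * t))) + 1)
        =ᶠ[nhds y] (fun z : ℝ => Real.exp (1 / z)) := by
      filter_upwards [Ioi_mem_nhds hy] with z hz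
      simp only [pow_zero, mul_one]
      rw [F_zero hz]
      ring
    have hD : HasDerivAt (fun z : ℝ => (∫ t in Ioi 0, f t * t ^ 0 * Real.exp (-(z * t))) + 1)
        (-(∫ t in Ioi 0, f t * t ^ (0 + 1) * Real.exp (-(y * t)))) y :=
      (hasDerivAt_F 0 hy).add_const 1
    rw [← heq.deriv_eq, hD.deriv]
    norm_num
  | succ m hm ih =>
    intro y hy
    rw [iteratedDeriv_succ]
    have heq : (fun z : ℝ => (-1 : ℝ) ^ m * ∫ t in Ioi 0, f t * t ^ m * Real.exp (-(z * t)))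
        =ᶠ[nhds y] iteratedDeriv m (fun y : ℝ => Real.exp (1 / y)) := by
      filter_upwards [Ioi_mem_nhds hy] with z hz
      exact (ih z hz).symm
    have hD := (hasDerivAt_F m hy).const_mul ((-1 : ℝ) ^ m)
    rw [← heq.deriv_eq, hD.deriv]
    rw [pow_succ]
    ring

end ExpInvAux

theorem iteratedDeriv_exp_inv_integral_repr (n : ℕ) (hn : 1 ≤ n) (x : ℝ) (hx : 0 < x) :
    iteratedDeriv n (fun y : ℝ => Real.exp (1 / y)) x
      = (-1 : ℝ) ^ n *
        ∫ t in Set.Ioi (0 : ℝ),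
          (∑' j : ℕ, t ^ j / ((Nat.factorial j : ℝ) * (Nat.factorial (j + 1))))
            * t ^ n * Real.exp (-(x * t)) := by
  exact ExpInvAux.main_claim n hn x hx
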